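/- arXiv:1602.02057 — 2 statements merged into one kernel-verified Lean document; each statement's English description precedes it below -/
import Mathlib

section
/- (Cloning) For every natural number N ≥ 1, every real p ≥ 1, every nonzero vector c ∈ ℝ^N with coefficients sorted in ascending order 0 ≤ c_1 ≤ … ≤ c_N, and every natural number M ≥ 1, the Generalised Differential Sparsity of the MN-dimensional vector obtained by concatenating M copies of c equals that of c: S_p(c‖c‖…‖c) = S_p(c). -/
open Finset

/-- Generalised Differential Sparsity of order `p`, in its permutation-invariant
form `S_p(c) = (1/(N · Σ_i c_i^p)) · Σ_{i<j} |c_j − c_i|^p`, which agrees with the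
sorted-coefficients formula when `c` is sorted in ascending order. -/
noncomputable def gds (N : ℕ) (p : ℝ) (c : Fin N → ℝ) : ℝ :=
  (1 / (N * ∑ i, c i ^ p)) *
    ∑ i : Fin N, ∑ j : Fin N, if i < j then |c j - c i| ^ p else 0

lemma sum_clone (M N : ℕ) (hN : 1 ≤ N) (f : Fin N → ℝ) :
    ∑ i : Fin (M * N), f ⟨(i : ℕ) % N, Nat.mod_lt _ hN⟩ = M * ∑ j, f j := by
  rw [← Fintype.sum_equiv (finProdFinEquiv : Fin M × Fin N ≃ Fin (M * N))
      (fun x => f ⟨((finProdFinEquiv x : Fin (M * N)) : ℕ) % N, Nat.mod_lt _ hN⟩)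
      (fun i => f ⟨(i : ℕ) % N, Nat.mod_lt _ hN⟩) (fun x => rfl)]
  have : ∀ x : Fin M × Fin N,
      f ⟨((finProdFinEquiv x : Fin (M * N)) : ℕ) % N, Nat.mod_lt _ hN⟩ = f x.2 := by
    intro x
    congr 1
    ext
    simp [finProdFinEquiv_apply_val, Nat.add_mul_mod_self_left, Nat.mod_eq_of_lt x.2.isLt]
  simp_rw [this]
  rw [Fintype.sum_prod_type]
  simp [mul_comm]

lemma half_sum (N : ℕ) (F : Fin N → Fin N → ℝ) (hsymm : ∀ i j, F i j = F j i)
    (hdiag : ∀ i, F i i = 0) :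
    ∑ i : Fin N, ∑ j : Fin N, (if i < j then F i j else 0)
      = (1 / 2) * ∑ i : Fin N, ∑ j : Fin N, F i j := by
  have key : ∑ i : Fin N, ∑ j : Fin N, F i j
      = (∑ i : Fin N, ∑ j : Fin N, (if i < j then F i j else 0))
        + ∑ i : Fin N, ∑ j : Fin N, (if j < i then F i j else 0) := by
    rw [← Finset.sum_add_distrib]
    simp_rw [← Finset.sum_add_distrib]
    apply Finset.sum_congr rfl
    intro i _
    apply Finset.sum_congr rfl
    intro j _
    rcases lt_trichotomy i j with h | h | h
    · simp [h, not_lt.mpr h.le]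
    · simp [h, hdiag]
    · simp [h, not_lt.mpr h.le]
  have swap : ∑ i : Fin N, ∑ j : Fin N, (if j < i then F i j else 0)
      = ∑ i : Fin N, ∑ j : Fin N, (if i < j then F i j else 0) := by
    rw [Finset.sum_comm]
    apply Finset.sum_congr rfl
    intro i _
    apply Finset.sum_congr rfl
    intro j _
    rcases lt_or_ge i j with h | h
    · simp [h, hsymm i j]
    · simp [not_lt.mpr h]
  rw [swap] at key
  linarith [key]

theorem gds_cloning (N : ℕ) (hN : 1 ≤ N) (p : ℝ) (hp : 1 ≤ p)
    (c : Fin N → ℝ) (hc0 : ∀ i, 0 ≤ c i) (hmono : Monotone c) (hne : c ≠ 0)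
    (M : ℕ) (hM : 1 ≤ M) :
    gds (M * N) p (fun i : Fin (M * N) => c ⟨(i : ℕ) % N, Nat.mod_lt _ hN⟩)
      = gds N p c := by
  have hp0 : p ≠ 0 := by positivity
  unfold gds
  set d : Fin (M * N) → ℝ := fun i => c ⟨(i : ℕ) % N, Nat.mod_lt _ hN⟩ with hd
  have hsum : ∑ i : Fin (M * N), d i ^ p = M * ∑ i, c i ^ p :=
    sum_clone M N hN (fun j => c j ^ p)
  have hdiagd : ∀ i : Fin (M * N), |d i - d i| ^ p = 0 := by
    intro i; simp [Real.zero_rpow hp0]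
  have hdiagc : ∀ i : Fin N, |c i - c i| ^ p = 0 := by
    intro i; simp [Real.zero_rpow hp0]
  have hnum : ∑ i : Fin (M * N), ∑ j : Fin (M * N), (if i < j then |d j - d i| ^ p else 0)
      = (1 / 2) * (M * (M * ∑ i : Fin N, ∑ j : Fin N, |c j - c i| ^ p)) := by
    rw [half_sum (M * N) (fun i j => |d j - d i| ^ p)
      (fun i j => by rw [abs_sub_comm]) hdiagd]
    congr 1
    rw [sum_clone M N hN (fun x => ∑ j : Fin (M * N), |d j - c x| ^ p)]
    congr 2
    rw [Finset.mul_sum]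
    exact Finset.sum_congr rfl fun x _ => sum_clone M N hN (fun y => |c y - c x| ^ p)
  have hnum' : ∑ i : Fin N, ∑ j : Fin N, (if i < j then |c j - c i| ^ p else 0)
      = (1 / 2) * ∑ i : Fin N, ∑ j : Fin N, |c j - c i| ^ p :=
    half_sum N (fun i j => |c j - c i| ^ p) (fun i j => by rw [abs_sub_comm]) hdiagc
  rw [hnum, hnum', hsum]
  push_cast
  set S := ∑ i, c i ^ p
  set T := ∑ i : Fin N, ∑ j : Fin N, |c j - c i| ^ p
  have hM0 : (M : ℝ) ≠ 0 := by exact_mod_cast Nat.one_le_iff_ne_zero.mp hM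
  rcases eq_or_ne S 0 with hS | hS
  · simp [hS]
  · field_simp
end

section
/- (Babies) For every natural number N ≥ 1, every real p ≥ 1, and every nonzero vector c ∈ ℝ^N with nonnegative coefficients that are not all equal to 0 (and, for strictness, not all equal to each other or at least one coefficient positive), appending a zero coefficient strictly increases the Generalised Differential Sparsity: S_p(c ‖ 0) > S_p(c), where c ‖ 0 is the (N+1)-dimensional vector obtained by appending the coefficient 0 to c. -/
open Finset

theorem gds_babies (N : ℕ) (hN : 1 ≤ N) (p : ℝ) (hp : 1 ≤ p)
    (c : Fin N → ℝ) (hc0 : ∀ i, 0 ≤ c i) (hne : c ≠ 0) :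
    gds (N + 1) p (Fin.snoc c 0) > gds N p c := by
  have hp0 : (0:ℝ) < p := by linarith
  set T := ∑ i, c i ^ p with hT
  set D := ∑ i : Fin N, ∑ j : Fin N, if i < j then |c j - c i| ^ p else 0 with hD
  obtain ⟨k, hk⟩ : ∃ k, c k ≠ 0 := by
    by_contra h; push_neg at h; exact hne (funext h)
  have hck : 0 < c k := lt_of_le_of_ne (hc0 k) (Ne.symm hk)
  have hTpos : 0 < T :=
    Finset.sum_pos' (fun i _ => Real.rpow_nonneg (hc0 i) p)
      ⟨k, mem_univ k, Real.rpow_pos_of_pos hck p⟩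
  have hDnn : 0 ≤ D := by
    apply Finset.sum_nonneg; intro i _
    apply Finset.sum_nonneg; intro j _
    split
    · exact Real.rpow_nonneg (abs_nonneg _) p
    · exact le_rfl
  -- key identity for counting
  have key : (∑ i : Fin N, ∑ j : Fin N, if i < j then c i ^ p + c j ^ p else 0)
      = ((N:ℝ) - 1) * T := by
    have h1 : (∑ i : Fin N, ∑ j : Fin N, if i < j then c i ^ p + c j ^ p else 0)
        = (∑ i : Fin N, ∑ j : Fin N, if i < j then c i ^ p else 0)
          + (∑ i : Fin N, ∑ j : Fin N, if i < j then c j ^ p else 0) := by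
      rw [← Finset.sum_add_distrib]
      apply Finset.sum_congr rfl; intro i _
      rw [← Finset.sum_add_distrib]
      apply Finset.sum_congr rfl; intro j _
      split <;> simp
    have h2 : (∑ i : Fin N, ∑ j : Fin N, if i < j then c j ^ p else 0)
        = ∑ i : Fin N, ∑ j : Fin N, if j < i then c i ^ p else 0 := by
      rw [Finset.sum_comm]
    rw [h1, h2, ← Finset.sum_add_distrib]
    have h3 : ∀ i : Fin N,
        ((∑ j : Fin N, if i < j then c i ^ p else 0)
          + ∑ j : Fin N, if j < i then c i ^ p else 0)
        = (N:ℝ) * c i ^ p - c i ^ p := by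
      intro i
      rw [← Finset.sum_add_distrib]
      have : ∀ j : Fin N,
          ((if i < j then c i ^ p else 0) + if j < i then c i ^ p else 0)
          = c i ^ p - (if j = i then c i ^ p else 0) := by
        intro j
        rcases lt_trichotomy i j with h | h | h
        · rw [if_pos h, if_neg (asymm h), if_neg (ne_of_gt h)]
          ring
        · subst h; simp
        · rw [if_neg (asymm h), if_pos h, if_neg (ne_of_lt h)]
          ring
      rw [Finset.sum_congr rfl fun j _ => this j, Finset.sum_sub_distrib]
      simp [Finset.sum_ite_eq, mul_comm]
    rw [Finset.sum_congr rfl fun i _ => h3 i, Finset.sum_sub_distrib,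
      ← Finset.mul_sum]
    ring
  -- D < N * T
  have hDle : D ≤ ((N:ℝ) - 1) * T := by
    rw [← key, hD]
    apply Finset.sum_le_sum; intro i _
    apply Finset.sum_le_sum; intro j _
    split
    · have habs : |c j - c i| ≤ max (c i) (c j) := by
        rw [abs_le]
        constructor
        · have := le_max_left (c i) (c j); have := hc0 j; linarith
        · have := le_max_right (c i) (c j); have := hc0 i; linarith
      have h1 : |c j - c i| ^ p ≤ max (c i) (c j) ^ p :=
        Real.rpow_le_rpow (abs_nonneg _) habs hp0.le
      rcases max_cases (c i) (c j) with ⟨h, _⟩ | ⟨h, _⟩ <;> rw [h] at h1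
      · have := Real.rpow_nonneg (hc0 j) p; linarith
      · have := Real.rpow_nonneg (hc0 i) p; linarith
    · exact le_rfl
  have hDlt : D < (N:ℝ) * T := lt_of_le_of_lt hDle (by nlinarith)
  -- compute the snoc quantities
  have hT' : (∑ i : Fin (N+1), ((Fin.snoc c 0 : Fin (N+1) → ℝ) i) ^ p) = T := by
    rw [Fin.sum_univ_castSucc]
    simp [Real.zero_rpow hp0.ne']
    exact hT.symm
  have hD' : (∑ i : Fin (N+1), ∑ j : Fin (N+1),
      if i < j then |(Fin.snoc c 0 : Fin (N+1) → ℝ) j - (Fin.snoc c 0 : Fin (N+1) → ℝ) i| ^ p else 0) = D + T := by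
    rw [Fin.sum_univ_castSucc]
    have hlast : (∑ j : Fin (N+1),
        if Fin.last N < j then |(Fin.snoc c 0 : Fin (N+1) → ℝ) j - (Fin.snoc c 0 : Fin (N+1) → ℝ) (Fin.last N)| ^ p else 0)
        = 0 := by
      apply Finset.sum_eq_zero; intro j _
      exact if_neg (not_lt.mpr (Fin.le_last j))
    rw [hlast, add_zero]
    have hinner : ∀ i : Fin N,
        (∑ j : Fin (N+1), if (i.castSucc) < j then
            |(Fin.snoc c 0 : Fin (N+1) → ℝ) j - (Fin.snoc c 0 : Fin (N+1) → ℝ) i.castSucc| ^ p else 0)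
        = (∑ j : Fin N, if i < j then |c j - c i| ^ p else 0) + c i ^ p := by
      intro i
      rw [Fin.sum_univ_castSucc]
      congr 1
      · apply Finset.sum_congr rfl; intro j _
        simp [Fin.castSucc_lt_castSucc_iff]
      · rw [if_pos (Fin.castSucc_lt_last i)]
        simp only [Fin.snoc_last, Fin.snoc_castSucc, zero_sub, abs_neg,
          abs_of_nonneg (hc0 i)]
    rw [Finset.sum_congr rfl fun i _ => hinner i, Finset.sum_add_distrib]
  -- final comparison
  unfold gds
  rw [hT', hD', ← hD, ← hT]
  have hNpos : (0:ℝ) < (N:ℝ) := by exact_mod_cast hN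
  have hd1 : (0:ℝ) < (N:ℝ) * T := mul_pos hNpos hTpos
  have hd2 : (0:ℝ) < ((N:ℝ)+1) * T := by positivity
  rw [gt_iff_lt, one_div_mul_eq_div, one_div_mul_eq_div]
  push_cast
  rw [div_lt_div_iff₀ hd1 hd2]
  nlinarith [mul_lt_mul_of_pos_right hDlt hTpos]
end
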